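/- For h ∈ ℂ with -1/2 < Re(h) < 1/2, the integral ∫₀^∞ x^{2h}/(π(1+x²)) dx equals 1/(2 cos(π h)). -/

import Mathlib

open MeasureTheory Set

lemma aux_beta (s : ℂ) (hs1 : 0 < s.re) (hs2 : s.re < 1) :
    ∫ u in Set.Ioi (0:ℝ), (u:ℂ) ^ (s-1) / (1 + (u:ℂ)) =
      (Real.pi : ℂ) / Complex.sin (Real.pi * s) := by
  have himg : (fun t : ℝ => t / (1 - t)) '' Ioo 0 1 = Ioi 0 := by
    ext u
    constructor
    · rintro ⟨t, ⟨ht0, ht1⟩, rfl⟩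
      exact div_pos ht0 (by linarith)
    · intro hu
      have hu' : 0 < u := hu
      refine ⟨u / (1 + u), ⟨div_pos hu' (by linarith), ?_⟩, ?_⟩
      · rw [div_lt_one (by linarith)]; linarith
      · have h1u : (1:ℝ) + u ≠ 0 := by positivity
        field_simp
        ring
  have hderiv : ∀ t ∈ Ioo (0:ℝ) 1, HasDerivWithinAt (fun t : ℝ => t / (1 - t))
      (((1 - t) ^ 2)⁻¹) (Ioo 0 1) t := by
    rintro t ⟨ht0, ht1⟩
    have hne : (1:ℝ) - t ≠ 0 := by linarith
    have := (hasDerivAt_id t).div ((hasDerivAt_const t (1:ℝ)).sub (hasDerivAt_id t)) hne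
    convert this.hasDerivWithinAt using 1
    · rfl
    · rfl
    · rfl
    simp only [Pi.sub_apply, id]
    field_simp
    ring
  have hinj : InjOn (fun t : ℝ => t / (1 - t)) (Ioo 0 1) := by
    rintro a ⟨ha0, ha1⟩ b ⟨hb0, hb1⟩ hab
    have hna : (1:ℝ) - a ≠ 0 := by linarith
    have hnb : (1:ℝ) - b ≠ 0 := by linarith
    simp only at hab
    field_simp at hab
    linarith
  rw [← himg, integral_image_eq_integral_abs_deriv_smul measurableSet_Ioo hderiv hinj]
  have key : ∫ t in Ioo (0:ℝ) 1, |((1 - t) ^ 2)⁻¹| •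
        ((↑(t / (1 - t)) : ℂ) ^ (s-1) / (1 + (↑(t / (1 - t)) : ℂ)))
      = ∫ t in Ioo (0:ℝ) 1, (t:ℂ) ^ (s-1) * (1 - (t:ℂ)) ^ ((1-s)-1) := by
    refine setIntegral_congr_fun measurableSet_Ioo fun t ht => ?_
    obtain ⟨ht0, ht1⟩ := ht
    have hb : (0:ℝ) < 1 - t := by linarith
    have hcast : ((1 - t : ℝ) : ℂ) = 1 - (t:ℂ) := by push_cast; ring
    have hbC : ((1 - t : ℝ) : ℂ) ≠ 0 := by exact_mod_cast hb.ne'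
    have harg : ((1 - t : ℝ) : ℂ).arg ≠ Real.pi := by
      rw [Complex.arg_ofReal_of_nonneg hb.le]
      exact Real.pi_ne_zero.symm
    have e1 : (1 : ℂ) + (↑(t / (1 - t)) : ℂ) = (((1 - t : ℝ) : ℂ))⁻¹ := by
      rw [← Complex.ofReal_inv, ← Complex.ofReal_one, ← Complex.ofReal_add]
      congr 1
      field_simp
      ring
    have e2 : (↑(t / (1 - t)) : ℂ) ^ (s - 1)
        = (t:ℂ) ^ (s-1) * (((1 - t : ℝ) : ℂ) ^ (s-1))⁻¹ := by
      rw [div_eq_mul_inv, Complex.ofReal_mul, Complex.ofReal_inv,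
        show ((t:ℝ):ℂ) * (((1-t:ℝ):ℂ))⁻¹ = ((t:ℝ):ℂ) * ((((1-t:ℝ))⁻¹ : ℝ):ℂ) by push_cast; ring,
        Complex.mul_cpow_ofReal_nonneg ht0.le (inv_nonneg.mpr hb.le), Complex.ofReal_inv,
        Complex.inv_cpow _ _ harg]
    have habs : |((1 - t) ^ 2)⁻¹| = ((1 - t) ^ 2)⁻¹ := abs_of_pos (by positivity)
    rw [habs, e1, e2, div_eq_mul_inv, inv_inv]
    rw [Complex.real_smul]
    push_cast
    rw [← hcast]
    have h2 : ((1-t:ℝ):ℂ) ^ (2:ℕ) = ((1-t:ℝ):ℂ) ^ (2:ℂ) := by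
      rw [← Complex.cpow_natCast]; norm_num
    have hpow : ((((1-t:ℝ):ℂ)) ^ (2:ℕ))⁻¹ * (((((1-t:ℝ):ℂ)) ^ (s-1))⁻¹ * (((1-t:ℝ):ℂ))) =
        (((1-t:ℝ):ℂ)) ^ (1 - s - 1) := by
      calc ((((1-t:ℝ):ℂ)) ^ (2:ℕ))⁻¹ * (((((1-t:ℝ):ℂ)) ^ (s-1))⁻¹ * (((1-t:ℝ):ℂ)))
          = (((1-t:ℝ):ℂ)) ^ (-(2:ℂ)) * ((((1-t:ℝ):ℂ)) ^ (-(s-1)) * (((1-t:ℝ):ℂ)) ^ (1:ℂ)) := by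
            rw [h2, ← Complex.cpow_neg, ← Complex.cpow_neg, Complex.cpow_one]
        _ = (((1-t:ℝ):ℂ)) ^ (-(2:ℂ) + (-(s-1) + 1)) := by
            rw [Complex.cpow_add _ _ hbC, Complex.cpow_add _ _ hbC]
        _ = (((1-t:ℝ):ℂ)) ^ (1 - s - 1) := by ring_nf
    rw [← hpow]
    ring
  rw [key]
  have hbeta : Complex.betaIntegral s (1 - s) =
      ∫ t in Ioo (0:ℝ) 1, (t:ℂ) ^ (s-1) * (1 - (t:ℂ)) ^ ((1-s)-1) := by
    rw [Complex.betaIntegral, intervalIntegral.integral_of_le zero_le_one,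
      integral_Ioc_eq_integral_Ioo]
  rw [← hbeta]
  have hG := Complex.Gamma_mul_Gamma_eq_betaIntegral (s := s) (t := 1 - s) hs1 (by rw [Complex.sub_re, Complex.one_re]; linarith)
  rw [show s + (1 - s) = 1 by ring, Complex.Gamma_one, one_mul] at hG
  rw [← hG, Complex.Gamma_mul_Gamma_one_sub]

theorem stmt0 (h : ℂ) (h1 : -(1/2) < h.re) (h2 : h.re < 1/2) :
    ∫ x in Set.Ioi (0:ℝ), (x : ℂ) ^ (2*h) / ((Real.pi : ℂ) * (1 + (x:ℂ)^2)) =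
      1 / (2 * Complex.cos (Real.pi * h)) := by
  set s : ℂ := h + 1/2 with hs
  have hs1 : 0 < s.re := by simp [hs, Complex.add_re]; linarith
  have hs2 : s.re < 1 := by simp [hs, Complex.add_re]; linarith
  have hpi : ((Real.pi : ℝ) : ℂ) ≠ 0 := by exact_mod_cast Real.pi_ne_zero
  have hsub := MeasureTheory.integral_comp_rpow_Ioi_of_pos
    (g := fun u : ℝ => (u:ℂ) ^ (s-1) / (1 + (u:ℂ))) (p := 2) two_pos
  have hpoint : ∀ x ∈ Ioi (0:ℝ),
      ((2 * x ^ ((2:ℝ) - 1)) • ((fun u : ℝ => (u:ℂ) ^ (s-1) / (1 + (u:ℂ))) (x ^ (2:ℝ))))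
      = 2 * (Real.pi : ℂ) * ((x:ℂ) ^ (2*h) / ((Real.pi : ℂ) * (1 + (x:ℂ)^2))) := by
    intro x hx
    have hx' : (0:ℝ) < x := hx
    have hxC : (x:ℂ) ≠ 0 := by exact_mod_cast hx'.ne'
    have hc1 : ((x ^ (2:ℝ) : ℝ) : ℂ) = (x:ℂ)^2 := by
      rw [Complex.ofReal_cpow hx'.le]
      norm_num
    have hc2 : ((x ^ (2:ℝ) : ℝ) : ℂ) ^ (s - 1) = (x:ℂ) ^ (2*h - 1) := by
      rw [← Complex.cpow_mul_ofReal_nonneg hx'.le]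
      congr 1
      push_cast
      rw [hs]
      ring
    simp only
    rw [hc2, hc1, Complex.real_smul]
    have hx1 : x ^ ((2:ℝ)-1) = x := by norm_num
    rw [hx1]
    have hxpow : (x:ℂ)^(2*h) = (x:ℂ)^(2*h-1) * (x:ℂ) := by
      conv_lhs => rw [show 2*h = (2*h-1) + 1 by ring]
      rw [Complex.cpow_add _ _ hxC, Complex.cpow_one]
    push_cast
    rw [div_eq_mul_inv, div_eq_mul_inv, mul_inv]
    calc (2 * (x:ℂ)) * ((x:ℂ)^(2*h-1) * (1 + (x:ℂ)^2)⁻¹)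
        = 2 * ((x:ℂ)^(2*h-1) * (x:ℂ)) * (1 + (x:ℂ)^2)⁻¹ := by ring
      _ = 2 * (x:ℂ)^(2*h) * (1 + (x:ℂ)^2)⁻¹ := by rw [← hxpow]
      _ = 2 * (Real.pi:ℂ) * ((x:ℂ)^(2*h) * ((Real.pi:ℂ)⁻¹ * (1 + (x:ℂ)^2)⁻¹)) := by
          rw [show (2:ℂ) * (Real.pi:ℂ) * ((x:ℂ)^(2*h) * ((Real.pi:ℂ)⁻¹ * (1 + (x:ℂ)^2)⁻¹))
              = ((Real.pi:ℂ) * (Real.pi:ℂ)⁻¹) * (2 * (x:ℂ)^(2*h) * (1 + (x:ℂ)^2)⁻¹) from by ring,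
            mul_inv_cancel₀ hpi, one_mul]
  rw [setIntegral_congr_fun measurableSet_Ioi hpoint] at hsub
  rw [integral_const_mul] at hsub
  rw [aux_beta s hs1 hs2] at hsub
  have hcos : Complex.sin ((Real.pi:ℂ) * s) = Complex.cos ((Real.pi:ℂ) * h) := by
    rw [hs, mul_add, show (Real.pi:ℂ) * (1/2) = (Real.pi:ℂ)/2 by ring]
    exact Complex.sin_add_pi_div_two _
  rw [hcos] at hsub
  have h2pi : (2:ℂ) * (Real.pi:ℂ) ≠ 0 := by
    simp [hpi]
  refine mul_left_cancel₀ h2pi ?_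
  rw [hsub, mul_one_div, mul_div_mul_left _ _ (two_ne_zero)]
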